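/- (Reduction of the KODS Lagrangian to the dual objective.) Let X be a real d×n matrix, 𝕂 = XᵀX, η ∈ ℝ, and let Y, Z be K×n real matrices satisfying (Y − Z)1ₙ = 0. Set W₁ = XZᵀ, W₂ = −XYᵀ, and let b₁, b₂ ∈ ℝ^K satisfy b₁ − b₂ = Y1ₙ. Then the Lagrangian L(W₁, W₂, b₁, b₂, Y, Z) = −tr(W₁ᵀW₂) + ½‖b₁ − b₂‖² + tr(Yᵀ(η 1_{K×n} − W₁ᵀX − b₁1ₙᵀ)) + tr(Zᵀ(W₂ᵀX + b₂1ₙᵀ + η 1_{K×n})) evaluates to L = −(½ 1ₙᵀ Yᵀ Y 1ₙ + tr(Y 𝕂 Zᵀ) − η tr((Y + Z)ᵀ 1_{K×n})); i.e., the Lagrangian at these substitutions equals the negative of the KODS dual objective. -/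
import Mathlib
open Matrix
open scoped Matrix

lemma trace_transpose_vecMulVec {m k : ℕ} (A : Matrix (Fin k) (Fin m) ℝ)
    (b : Fin k → ℝ) (v : Fin m → ℝ) :
    Matrix.trace (Aᵀ * Matrix.vecMulVec b v) = b ⬝ᵥ (A *ᵥ v) := by
  simp [Matrix.trace, Matrix.diag, Matrix.mul_apply, Matrix.vecMulVec_apply,
    dotProduct, Matrix.mulVec, Finset.mul_sum]
  rw [Finset.sum_comm]
  exact Finset.sum_congr rfl fun i _ => Finset.sum_congr rfl fun j _ => by ring

/-- **Reduction of the KODS Lagrangian to the dual objective.**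
With `𝕂 = XᵀX`, `(Y − Z)1ₙ = 0`, `W₁ = XZᵀ`, `W₂ = −XYᵀ`, and `b₁ − b₂ = Y1ₙ`, the
Lagrangian `L = −tr(W₁ᵀW₂) + ½‖b₁−b₂‖² + tr(Yᵀ(η1_{K×n} − W₁ᵀX − b₁1ₙᵀ))
+ tr(Zᵀ(W₂ᵀX + b₂1ₙᵀ + η1_{K×n}))` equals
`−(½ 1ₙᵀYᵀY1ₙ + tr(Y𝕂Zᵀ) − η tr((Y+Z)ᵀ1_{K×n}))`, the negative of the KODS dual
objective. -/
theorem kods_lagrangian_eq_neg_dual {d n K : ℕ}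
    (X : Matrix (Fin d) (Fin n) ℝ) (η : ℝ)
    (Y Z : Matrix (Fin K) (Fin n) ℝ) (b₁ b₂ : Fin K → ℝ)
    (ones : Fin n → ℝ) (hones : ones = fun _ => 1)
    (J : Matrix (Fin K) (Fin n) ℝ) (hJ : J = fun _ _ => 1)
    (hYZ : (Y - Z) *ᵥ ones = 0)
    (hb : b₁ - b₂ = Y *ᵥ ones) :
    - Matrix.trace ((X * Zᵀ)ᵀ * (-(X * Yᵀ)))
      + (1 / 2) * ((b₁ - b₂) ⬝ᵥ (b₁ - b₂))
      + Matrix.trace (Yᵀ * (η • J - (X * Zᵀ)ᵀ * X - Matrix.vecMulVec b₁ ones))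
      + Matrix.trace (Zᵀ * ((-(X * Yᵀ))ᵀ * X + Matrix.vecMulVec b₂ ones + η • J))
    = -((1 / 2) * ((Y *ᵥ ones) ⬝ᵥ (Y *ᵥ ones))
        + Matrix.trace (Y * (Xᵀ * X) * Zᵀ)
        - η * Matrix.trace ((Y + Z)ᵀ * J)) := by
  have h1 : Z *ᵥ ones = Y *ᵥ ones := by
    have := hYZ
    rw [Matrix.sub_mulVec, sub_eq_zero] at this
    exact this.symm
  rw [hb]
  simp only [Matrix.transpose_neg, Matrix.transpose_mul, Matrix.transpose_transpose,
    Matrix.mul_neg, Matrix.neg_mul, Matrix.trace_neg, Matrix.mul_sub, Matrix.mul_add,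
    Matrix.trace_sub, Matrix.trace_add, Matrix.mul_smul, Matrix.trace_smul, smul_eq_mul,
    trace_transpose_vecMulVec, h1]
  have k1 : Matrix.trace (Z * Xᵀ * (X * Yᵀ)) = Matrix.trace (Y * (Xᵀ * X) * Zᵀ) := by
    rw [← Matrix.trace_transpose (Y * (Xᵀ * X) * Zᵀ)]
    simp [Matrix.transpose_mul, Matrix.mul_assoc]
  have k2 : Matrix.trace (Yᵀ * (Z * Xᵀ * X)) = Matrix.trace (Y * (Xᵀ * X) * Zᵀ) := by
    rw [Matrix.trace_mul_comm]
    simpa [Matrix.mul_assoc] using k1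
  have k3 : Matrix.trace (Zᵀ * (Y * Xᵀ * X)) = Matrix.trace (Y * (Xᵀ * X) * Zᵀ) := by
    rw [Matrix.trace_mul_comm]
    simp [Matrix.mul_assoc]
  have k4 : b₁ ⬝ᵥ (Y *ᵥ ones) - b₂ ⬝ᵥ (Y *ᵥ ones) = (Y *ᵥ ones) ⬝ᵥ (Y *ᵥ ones) := by
    rw [← sub_dotProduct, hb]
  have k5 : Matrix.trace ((Y + Z)ᵀ * J) = Matrix.trace (Yᵀ * J) + Matrix.trace (Zᵀ * J) := by
    rw [Matrix.transpose_add, Matrix.add_mul, Matrix.trace_add]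
  rw [k1, k2, k3, k5]
  linarith
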